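/- arXiv:2110.12578 — 6 statements merged into one kernel-verified Lean document; each statement's English description precedes it below -/
import Mathlib

section
/- Two plans that are permutations of each other and induce the same partial order ≺ admit the same set of trains reaching their destinations: for every train, its subsequence of actions (its path) is identical in both plans. -/
/-- `a` and `b` are consecutive actions of the same train along its path in the plan `π`. -/
def consecSameTrain {T R : Type} [DecidableEq T] (π : List (T × R)) (a b : T × R) : Prop :=
  ∃ l₁ l₂ : List (T × R), π.filter (fun x => decide (x.1 = a.1)) = l₁ ++ [a, b] ++ l₂

/-- `a` and `b` are actions on conflicting routes, appearing in `π` in this order. -/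
def conflictOrder {T R : Type} [DecidableEq T] [DecidableEq R]
    (Conflicts : R → R → Prop) (π : List (T × R)) (a b : T × R) : Prop :=
  a ∈ π ∧ b ∈ π ∧ π.idxOf a < π.idxOf b ∧ Conflicts a.2 b.2

/-- The plan order ≺_π. -/
def planOrder {T R : Type} [DecidableEq T] [DecidableEq R]
    (Conflicts : R → R → Prop) (π : List (T × R)) : (T × R) → (T × R) → Prop :=
  Relation.TransGen (fun a b => consecSameTrain π a b ∨ conflictOrder Conflicts π a b)

/-- `a` appears (strictly) before `b` in `l`. -/
def MyBefore {α : Type} (l : List α) (a b : α) : Prop :=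
  ∃ s t u : List α, l = s ++ a :: t ++ b :: u

lemma my_indexOf_cons_self {α : Type} [BEq α] [LawfulBEq α] (a : α) (l : List α) :
    List.idxOf a (a :: l) = 0 := by
  simp [List.idxOf, List.findIdx_cons]

lemma my_indexOf_cons_ne {α : Type} [BEq α] [LawfulBEq α] {a b : α} (l : List α) (h : b ≠ a) :
    List.idxOf a (b :: l) = List.idxOf a l + 1 := by
  have : (b == a) = false := beq_eq_false_iff_ne.mpr h
  simp [List.idxOf, List.findIdx_cons, this]

lemma filter_adj_idx {α : Type} [BEq α] [LawfulBEq α] :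
    ∀ (π : List α) (p : α → Bool) (s u : List α) (a b : α), π.Nodup →
      π.filter p = s ++ a :: b :: u → π.idxOf a < π.idxOf b := by
  intro π
  induction π with
  | nil =>
    intro p s u a b _ h
    simp at h
  | cons x xs ih =>
    intro p s u a b hnd h
    obtain ⟨hx, hnd'⟩ := List.nodup_cons.mp hnd
    by_cases hp : p x
    · rw [List.filter_cons_of_pos hp] at h
      cases s with
      | nil =>
        simp at h
        obtain ⟨hxa, hrest⟩ := h
        have hb : b ∈ xs := List.mem_of_mem_filter (l := xs) (by rw [hrest]; simp)
        have hba : b ≠ x := fun hh => hx (hh ▸ hb)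
        subst hxa
        rw [my_indexOf_cons_self, my_indexOf_cons_ne _ (by exact fun hh => hba hh.symm)]
        omega
      | cons y s' =>
        simp at h
        obtain ⟨hxy, hrest⟩ := h
        have ha : a ∈ xs := List.mem_of_mem_filter (l := xs) (by rw [hrest]; simp)
        have hb : b ∈ xs := List.mem_of_mem_filter (l := xs) (by rw [hrest]; simp)
        have hax : a ≠ x := fun hh => hx (hh ▸ ha)
        have hbx : b ≠ x := fun hh => hx (hh ▸ hb)
        rw [my_indexOf_cons_ne _ (fun hh => hax hh.symm),
            my_indexOf_cons_ne _ (fun hh => hbx hh.symm)]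
        have := ih p s' u a b hnd' hrest
        omega
    · rw [List.filter_cons_of_neg hp] at h
      have ha : a ∈ xs := List.mem_of_mem_filter (l := xs) (by rw [h]; simp)
      have hb : b ∈ xs := List.mem_of_mem_filter (l := xs) (by rw [h]; simp)
      have hax : a ≠ x := fun hh => hx (hh ▸ ha)
      have hbx : b ≠ x := fun hh => hx (hh ▸ hb)
      rw [my_indexOf_cons_ne _ (fun hh => hax hh.symm),
          my_indexOf_cons_ne _ (fun hh => hbx hh.symm)]
      have := ih p s u a b hnd' h
      omega

lemma edge_idx {T R : Type} [DecidableEq T] [DecidableEq R]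
    (Conflicts : R → R → Prop) (π : List (T × R)) (hnd : π.Nodup) (a b : T × R)
    (h : consecSameTrain π a b ∨ conflictOrder Conflicts π a b) :
    π.idxOf a < π.idxOf b := by
  rcases h with ⟨s, u, h⟩ | ⟨_, _, h, _⟩
  · exact filter_adj_idx π _ s u a b hnd (by simpa using h)
  · exact h

lemma planOrder_idx {T R : Type} [DecidableEq T] [DecidableEq R]
    (Conflicts : R → R → Prop) (π : List (T × R)) (hnd : π.Nodup) (a b : T × R)
    (h : planOrder Conflicts π a b) : π.idxOf a < π.idxOf b := by
  induction h with
  | single h => exact edge_idx Conflicts π hnd a _ h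
  | tail _ h ih => exact ih.trans (edge_idx Conflicts π hnd _ _ h)

lemma before_filter_planOrder {T R : Type} [DecidableEq T] [DecidableEq R]
    (Conflicts : R → R → Prop) (π : List (T × R)) (t : T) :
    ∀ (m s u : List (T × R)) (a b : T × R),
      π.filter (fun x => decide (x.1 = t)) = s ++ a :: m ++ b :: u →
      planOrder Conflicts π a b := by
  intro m
  induction m with
  | nil =>
    intro s u a b h
    have ha : a ∈ π.filter (fun x => decide (x.1 = t)) := by rw [h]; simp
    have hat : a.1 = t := by
      have := (List.mem_filter.mp ha).2
      simpa using this
    refine Relation.TransGen.single (Or.inl ⟨s, u, ?_⟩)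
    have hpe : (fun x : T × R => decide (x.1 = a.1)) = (fun x => decide (x.1 = t)) := by
      funext x; rw [hat]
    rw [hpe, h]; simp
  | cons c m' ih =>
    intro s u a b h
    have ha : a ∈ π.filter (fun x => decide (x.1 = t)) := by rw [h]; simp
    have hat : a.1 = t := by
      have := (List.mem_filter.mp ha).2
      simpa using this
    have hbase : consecSameTrain π a c := by
      refine ⟨s, m' ++ b :: u, ?_⟩
      have hpe : (fun x : T × R => decide (x.1 = a.1)) = (fun x => decide (x.1 = t)) := by
        funext x; rw [hat]
      rw [hpe, h]; simp
    have hrest : planOrder Conflicts π c b := by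
      apply ih (s ++ [a]) u c b
      rw [h]; simp
    exact Relation.TransGen.head (Or.inl hbase) hrest

lemma before_total {α : Type} :
    ∀ (l : List α) (a b : α), a ∈ l → b ∈ l → a ≠ b →
      MyBefore l a b ∨ MyBefore l b a := by
  intro l
  induction l with
  | nil => intro a b ha; simp at ha
  | cons x xs ih =>
    intro a b ha hb hne
    by_cases hxa : x = a
    · subst hxa
      have hb' : b ∈ xs := by
        rcases List.mem_cons.mp hb with h | h
        · exact absurd h.symm hne
        · exact h
      obtain ⟨s, u, hsu⟩ := List.append_of_mem hb'
      exact Or.inl ⟨[], s, u, by simp [hsu]⟩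
    · by_cases hxb : x = b
      · subst hxb
        have ha' : a ∈ xs := by
          rcases List.mem_cons.mp ha with h | h
          · exact absurd h.symm (Ne.symm hne)
          · exact h
        obtain ⟨s, u, hsu⟩ := List.append_of_mem ha'
        exact Or.inr ⟨[], s, u, by simp [hsu]⟩
      · have ha' : a ∈ xs := by
          rcases List.mem_cons.mp ha with h | h
          · exact absurd h (fun hh => hxa hh.symm)
          · exact h
        have hb' : b ∈ xs := by
          rcases List.mem_cons.mp hb with h | h
          · exact absurd h (fun hh => hxb hh.symm)
          · exact h
        rcases ih a b ha' hb' hne with ⟨s, tt, u, h⟩ | ⟨s, tt, u, h⟩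
        · exact Or.inl ⟨x :: s, tt, u, by simp [h]⟩
        · exact Or.inr ⟨x :: s, tt, u, by simp [h]⟩

lemma eq_of_before {α : Type} :
    ∀ (l₁ l₂ : List α), l₁.Nodup → l₂.Nodup → l₁.Perm l₂ →
      (∀ a b, MyBefore l₁ a b → MyBefore l₂ a b) → l₁ = l₂ := by
  intro l₁
  induction l₁ with
  | nil =>
    intro l₂ _ _ hp _
    exact hp.nil_eq
  | cons x xs ih =>
    intro l₂ hnd1 hnd2 hp hbef
    obtain ⟨hx, hnd1'⟩ := List.nodup_cons.mp hnd1
    cases l₂ with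
    | nil => exact absurd hp.symm.nil_eq (by simp)
    | cons y ys =>
      obtain ⟨hy, hnd2'⟩ := List.nodup_cons.mp hnd2
      have hxy : x = y := by
        by_contra hne
        have hxmem : x ∈ y :: ys := hp.mem_iff.mp (by simp)
        have hx' : x ∈ ys := by
          rcases List.mem_cons.mp hxmem with h | h
          · exact absurd h hne
          · exact h
        have hymem : y ∈ x :: xs := hp.mem_iff.mpr (by simp)
        have hy' : y ∈ xs := by
          rcases List.mem_cons.mp hymem with h | h
          · exact absurd h.symm hne
          · exact h
        obtain ⟨s, u, hsu⟩ := List.append_of_mem hy'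
        have hb1 : MyBefore (x :: xs) x y := ⟨[], s, u, by simp [hsu]⟩
        obtain ⟨s₂, t₂, u₂, h₂⟩ := hbef x y hb1
        cases s₂ with
        | nil =>
          simp at h₂
          exact hne h₂.1.symm
        | cons z s₂' =>
          simp at h₂
          obtain ⟨hyz, hrest⟩ := h₂
          exact hy (by rw [hrest]; simp)
      subst hxy
      have hp' : xs.Perm ys := hp.cons_inv
      have hbef' : ∀ a b, MyBefore xs a b → MyBefore ys a b := by
        rintro a b ⟨s, tt, u, h⟩
        have hax : a ≠ x := fun hh => hx (hh ▸ (by rw [h]; simp : a ∈ xs))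
        obtain ⟨s₂, t₂, u₂, h₂⟩ := hbef a b ⟨x :: s, tt, u, by simp [h]⟩
        cases s₂ with
        | nil =>
          simp at h₂
          exact absurd h₂.1.symm hax
        | cons z s₂' =>
          simp at h₂
          exact ⟨s₂', t₂, u₂, by simpa using h₂.2⟩
      rw [ih ys hnd1' hnd2' hp' hbef']

/-- two plans that are permutations of each other (same distinct
actions) inducing the same partial order have, for each train, identical
subsequences of actions (identical train paths). -/
theorem stmt1 {T R : Type} [DecidableEq T] [DecidableEq R]
    (Conflicts : R → R → Prop)
    (hirr : ∀ r, ¬ Conflicts r r)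
    (hsym : ∀ a b, Conflicts a b → Conflicts b a)
    (π₁ π₂ : List (T × R)) (hperm : π₁.Perm π₂) (hnd : π₁.Nodup)
    (horder : planOrder Conflicts π₁ = planOrder Conflicts π₂) :
    ∀ t : T, π₁.filter (fun x => decide (x.1 = t)) = π₂.filter (fun x => decide (x.1 = t)) := by
  intro t
  have hnd2 : π₂.Nodup := hperm.nodup_iff.mp hnd
  set p : T × R → Bool := fun x => decide (x.1 = t) with hpdef
  have hpf : (π₁.filter p).Perm (π₂.filter p) := hperm.filter p
  apply eq_of_before _ _ (hnd.filter p) (hnd2.filter p) hpf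
  rintro a b ⟨s, m, u, h⟩
  have h1 : planOrder Conflicts π₁ a b := before_filter_planOrder Conflicts π₁ t m s u a b h
  have h2 : planOrder Conflicts π₂ a b := horder ▸ h1
  have ha2 : a ∈ π₂.filter p := hpf.mem_iff.mp (by rw [h]; simp)
  have hb2 : b ∈ π₂.filter p := hpf.mem_iff.mp (by rw [h]; simp)
  have hne : a ≠ b := by
    have hnd' := hnd.filter p
    rw [h] at hnd'
    intro hab
    subst hab
    simp [List.nodup_append] at hnd'
  rcases before_total _ a b ha2 hb2 hne with hgood | ⟨s', m', u', hbad⟩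
  · exact hgood
  · exfalso
    have hba : planOrder Conflicts π₂ b a :=
      before_filter_planOrder Conflicts π₂ t m' s' u' b a hbad
    have haa : planOrder Conflicts π₂ a a := h2.trans hba
    exact lt_irrefl _ (planOrder_idx Conflicts π₂ hnd2 a a haa)
end

section
/- Any linear extension of the partial order ≺_π of a correct plan π is itself a plan inducing the same partial order: if σ is a permutation of π such that whenever a ≺_π b then a precedes b in σ, then ≺_σ = ≺_π. -/
/-- Every list is a chain for the "adjacent infix" relation. -/
lemma chain'_infix_aux {α : Type*} (L : List α) :
    ∀ (l₁ rest : List α), L = l₁ ++ rest →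
      List.IsChain (fun a b => ∃ p q, L = p ++ a :: b :: q) rest := by
  intro l₁ rest
  induction rest generalizing l₁ with
  | nil => intro _; simp
  | cons a t ih =>
    intro h
    cases t with
    | nil => simp
    | cons b t' =>
      rw [List.isChain_cons_cons]
      exact ⟨⟨l₁, t', by simpa using h⟩, ih (l₁ ++ [a]) (by simpa using h)⟩

lemma chain'_infix {α : Type*} (L : List α) :
    List.IsChain (fun a b => ∃ p q, L = p ++ a :: b :: q) L :=
  chain'_infix_aux L [] L rfl

/-- Adjacent pairs in the per-train filter are consecutive same-train actions. -/
lemma pairwise_planOrder_filter {T R : Type} [DecidableEq T] [DecidableEq R]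
    (Conflicts : R → R → Prop) (π : List (T × R)) (t : T) :
    List.Pairwise (planOrder Conflicts π) (π.filter (fun x => decide (x.1 = t))) := by
  haveI : IsTrans (T × R) (planOrder Conflicts π) := ⟨fun _ _ _ => Relation.TransGen.trans⟩
  rw [← List.isChain_iff_pairwise]
  refine (chain'_infix (π.filter (fun x => decide (x.1 = t)))).imp ?_
  rintro a b ⟨p, q, hpq⟩
  have ha : a ∈ π.filter (fun x => decide (x.1 = t)) := by
    rw [hpq]; exact List.mem_append.2 (Or.inr (by simp))
  have hat : a.1 = t := by simpa using (List.mem_filter.1 ha).2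
  exact Relation.TransGen.single (Or.inl ⟨p, q, by rw [hat]; simpa using hpq⟩)

lemma indexOf_inst_eq {T R : Type} [DecidableEq T] [DecidableEq R]
    (l : List (T × R)) (a : T × R) :
    @List.idxOf _ instBEqProd a l = @List.idxOf _ instBEqOfDecidableEq a l := by
  unfold List.idxOf
  congr 1
  funext x
  rw [Bool.eq_iff_iff]
  simp [instBEqProd, instBEqOfDecidableEq, beq_iff_eq, Prod.ext_iff]

/-- any linear extension σ of the partial order ≺_π of a plan π
(a permutation of π whose linear order extends ≺_π) induces the same partial
order: ≺_σ = ≺_π. -/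
theorem stmt2 {T R : Type} [DecidableEq T] [DecidableEq R]
    (Conflicts : R → R → Prop)
    (hirr : ∀ r, ¬ Conflicts r r)
    (hsym : ∀ a b, Conflicts a b → Conflicts b a)
    (π σ : List (T × R)) (hperm : σ.Perm π) (hnd : π.Nodup)
    (hext : ∀ a b, planOrder Conflicts π a b → σ.idxOf a < σ.idxOf b) :
    planOrder Conflicts σ = planOrder Conflicts π := by
  have hndσ : σ.Nodup := (hperm.nodup_iff).2 hnd
  -- the strict order by index in σ
  set r : (T × R) → (T × R) → Prop := fun a b => σ.idxOf a < σ.idxOf b with hr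
  haveI : Std.Antisymm r := ⟨fun a b h1 h2 => absurd h2 (by omega)⟩
  -- σ itself is pairwise increasing in index
  have hpwσ : List.Pairwise r σ := by
    rw [List.pairwise_iff_getElem]
    intro i j hi hj hij
    have h1 : σ.idxOf σ[i] = i := hndσ.idxOf_getElem i hi
    have h2 : σ.idxOf σ[j] = j := hndσ.idxOf_getElem j hj
    simp only [hr, h1, h2]
    exact hij
  -- the two per-train filters agree
  have hfilt : ∀ t : T, σ.filter (fun x => decide (x.1 = t)) =
      π.filter (fun x => decide (x.1 = t)) := by
    intro t
    refine List.Perm.eq_of_pairwise' (r := r) ?_ ?_ (hperm.filter _)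
    · exact hpwσ.sublist List.filter_sublist
    · exact (pairwise_planOrder_filter Conflicts π t).imp (fun h => hext _ _ h)
  -- consecutive-same-train coincides
  have hconsec : ∀ a b, consecSameTrain σ a b ↔ consecSameTrain π a b := by
    intro a b
    unfold consecSameTrain
    rw [hfilt a.1]
  ext a b
  constructor
  · -- planOrder σ ≤ planOrder π
    refine Relation.TransGen.mono ?_ a b
    rintro x y (h | ⟨hx, hy, hlt, hc⟩)
    · exact Or.inl ((hconsec x y).1 h)
    · have hxπ : x ∈ π := hperm.subset hx
      have hyπ : y ∈ π := hperm.subset hy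
      have hne : x ≠ y := by
        rintro rfl; exact hirr _ hc
      rcases lt_trichotomy (π.idxOf x) (π.idxOf y) with h' | h' | h'
      · exact Or.inr ⟨hxπ, hyπ, h', hc⟩
      · exact absurd ((List.idxOf_inj hxπ).1 h') hne
      · exfalso
        have : σ.idxOf y < σ.idxOf x :=
          hext _ _ (Relation.TransGen.single (Or.inr ⟨hyπ, hxπ, h', hsym _ _ hc⟩))
        omega
  · -- planOrder π ≤ planOrder σ
    refine Relation.TransGen.mono ?_ a b
    rintro x y (h | h)
    · exact Or.inl ((hconsec x y).2 h)
    · have hlt : σ.idxOf x < σ.idxOf y :=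
        hext _ _ (Relation.TransGen.single (Or.inr h))
      exact Or.inr ⟨hperm.mem_iff.2 h.1, hperm.mem_iff.2 h.2.1, hlt, h.2.2.2⟩
end

section
/- In a parallel plan (a sequence of sets of actions, where each set may be executed in one step), if in every step each executed action either belongs to the first step or has some conflicting action executed in the immediately preceding step (maximal progress), then the number of steps is at most 1 plus the length of the longest chain in the conflict-dependency partial order among actions. -/
/-- in a parallel plan S₁,…,S_k (pairwise disjoint nonempty sets of
actions) satisfying maximal progress (every action in a step i ≥ 2 has a
dependency-predecessor executed in step i−1), the number of steps k is at most
1 plus the length (number of D-edges, i.e. `M`) of the longest chain in the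
dependency relation D among actions of the plan. -/
theorem stmt3 {A : Type} (D : A → A → Prop) (k M : ℕ) (S : Fin k → Set A)
    (hne : ∀ i, (S i).Nonempty)
    (hdis : ∀ i j, i ≠ j → Disjoint (S i) (S j))
    (hmp : ∀ i : Fin k, 1 ≤ i.val → ∀ a ∈ S i,
      ∃ b ∈ S ⟨i.val - 1, by have := i.isLt; omega⟩, D b a)
    (hM : ∀ l : List A, l.Chain' D → (∀ a ∈ l, ∃ i, a ∈ S i) → l.length ≤ M + 1) :
    k ≤ 1 + M := by
  rcases Nat.eq_zero_or_pos k with hk | hk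
  · omega
  have key : ∀ n (h : n < k), ∀ a ∈ S ⟨n, h⟩,
      ∃ l : List A, l.Chain' D ∧ (∀ x ∈ l, ∃ j, x ∈ S j) ∧
        l.length = n + 1 ∧ l.getLast? = some a := by
    intro n
    induction n with
    | zero =>
      intro h a ha
      exact ⟨[a], List.isChain_singleton a, by simpa using ⟨_, ha⟩, rfl, rfl⟩
    | succ n ih =>
      intro h a ha
      obtain ⟨b, hb, hDba⟩ := hmp ⟨n + 1, h⟩ (Nat.le_add_left 1 n) a ha
      obtain ⟨l, hc, hmem, hlen, hlast⟩ := ih (by omega) b hb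
      refine ⟨l ++ [a], ?_, ?_, by simp [hlen], by simp⟩
      · rw [show List.Chain' D (l ++ [a]) ↔ List.IsChain D (l ++ [a]) from Iff.rfl, List.isChain_append]
        refine ⟨hc, List.isChain_singleton a, ?_⟩
        intro x hx y hy
        simp only [List.head?_cons, Option.mem_def, Option.some.injEq] at hy
        rw [hlast] at hx
        simp only [Option.mem_def, Option.some.injEq] at hx
        subst hx; subst hy; exact hDba
      · intro x hx
        rcases List.mem_append.1 hx with h' | h'
        · exact hmem x h'
        · simp at h'; subst h'; exact ⟨_, ha⟩
  obtain ⟨a, ha⟩ := hne ⟨k - 1, by omega⟩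
  obtain ⟨l, hc, hmem, hlen, -⟩ := key (k - 1) (by omega) a ha
  have := hM l hc hmem
  omega
end

section
/- In an acyclic route graph, the local path-consistency condition implies global path structure: if a train's set of occupied routes is such that every occupied route other than an initial one has a predecessor (a route whose exit delimiter equals its entry delimiter) that is also occupied by the same train, and at most one occupied route departs from any delimiter, then the occupied routes of that train form a union of directed paths each starting at an initially occupied route. -/
/-- Route `b` succeeds route `a` when the exit delimiter of `a` equals the
entry delimiter of `b` (both non-null). -/
def routeSucc {R D : Type} (exit entry : R → Option D) (a b : R) : Prop :=
  ∃ d : D, exit a = some d ∧ entry b = some d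

lemma chain'_mem_last {R : Type} {rel : R → R → Prop} :
    ∀ (l : List R) (x s : R), l.Chain' rel → x ∈ l → l.getLast? = some s →
      x = s ∨ Relation.TransGen rel x s := by
  intro l
  induction l with
  | nil => intro x s _ hx _; simp at hx
  | cons a t ih =>
    intro x s hch hx hlast
    cases t with
    | nil =>
      simp at hx hlast
      left; rw [hx, hlast]
    | cons b t' =>
      have hlast' : (b :: t').getLast? = some s := by
        simpa [List.getLast?] using hlast
      have hrel : rel a b := (List.isChain_cons_cons.mp hch).1
      have hch' : (b :: t').Chain' rel := (List.isChain_cons_cons.mp hch).2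
      rcases List.mem_cons.mp hx with rfl | hxt
      · have := ih b s hch' (by simp) hlast'
        rcases this with rfl | ht
        · right; exact Relation.TransGen.single hrel
        · right; exact (Relation.TransGen.single hrel).trans ht
      · exact ih x s hch' hxt hlast'

/-- in a finite acyclic route graph, local path-consistency implies
global path structure.  If every occupied route outside the initial set has an
occupied predecessor, and at most one occupied route departs from any
delimiter, then the occupied routes form a union of (simple) directed paths,
each starting at an initially occupied route: every occupied route lies at the
end of a simple directed path of occupied routes starting in `I`. -/
theorem stmt6 {R D : Type} [Fintype R] (entry exit : R → Option D)
    (hacyc : ∀ r : R, ¬ Relation.TransGen (routeSucc exit entry) r r)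
    (S I : Set R) (hIS : I ⊆ S) (hne : I.Nonempty)
    (h1 : ∀ r ∈ S, r ∉ I → ∃ s ∈ S, routeSucc exit entry s r)
    (h2 : ∀ d : D, ∀ r ∈ S, ∀ r' ∈ S, entry r = some d → entry r' = some d → r = r') :
    ∀ r ∈ S, ∃ l : List R, l.Nodup ∧ l.Chain' (routeSucc exit entry) ∧
      (∀ x ∈ l, x ∈ S) ∧ (∃ s ∈ I, l.head? = some s) ∧ l.getLast? = some r := by
  set rel := routeSucc exit entry with hrel
  haveI : IsTrans R (Relation.TransGen rel) := ⟨fun _ _ _ => Relation.TransGen.trans⟩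
  haveI : IsIrrefl R (Relation.TransGen rel) := ⟨hacyc⟩
  have hwf : WellFounded (Relation.TransGen rel) :=
    Finite.wellFounded_of_trans_of_irrefl _
  have hwf' : WellFounded rel :=
    Subrelation.wf (fun h => Relation.TransGen.single h) hwf
  intro r hr
  induction r using hwf'.induction with
  | _ r ih =>
    by_cases hrI : r ∈ I
    · exact ⟨[r], by simp, by simp [List.Chain'], by simpa using hr, ⟨r, hrI, rfl⟩, by simp⟩
    · obtain ⟨s, hsS, hsr⟩ := h1 r hr hrI
      obtain ⟨l, hnd, hch, hmem, ⟨i, hiI, hhead⟩, hlast⟩ := ih s hsr hsS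
      refine ⟨l ++ [r], ?_, ?_, ?_, ⟨i, hiI, ?_⟩, ?_⟩
      · rw [List.nodup_append]
        refine ⟨hnd, by simp, ?_⟩
        intro x hx y hx' hxy
        simp at hx'
        subst hx'
        subst hxy
        rcases chain'_mem_last l x s hch hx hlast with rfl | ht
        · exact hacyc x (Relation.TransGen.single hsr)
        · exact hacyc x (ht.trans (Relation.TransGen.single hsr))
      · rw [List.Chain', List.isChain_append]
        refine ⟨hch, by simp, ?_⟩
        intro x hx y hy
        simp at hy; subst hy
        rw [hlast] at hx; cases hx; exact hsr
      · intro x hx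
        rcases List.mem_append.mp hx with h | h
        · exact hmem x h
        · simp at h; subst h; exact hr
      · have : l ≠ [] := by rintro rfl; simp at hhead
        cases l with
        | nil => simp at hhead
        | cons a t => simpa using hhead
      · simp [List.getLast?_concat]
end

section
/- The freeable predicate correctly characterizes path length: freeable_t(a, l) holds for occupation o if and only if either there is a directed path a = r₀, r₁, …, r_m of routes all occupied by t (except possibly a) with Σ_{i=0}^{m−1} routeLength(r_i) ≥ l, or there is such a path occupied by t ending in a route with exit = null. -/
/-- The `freeable` predicate (inductive rendering of the recursive definition,
the two coincide on a finite acyclic route graph). -/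
inductive Freeable {R D T : Type} (exit entry : R → Option D) (len : R → ℝ)
    (occ : R → Option T) (t : T) : R → ℝ → Prop
  | exit_null (a : R) (l : ℝ) : exit a = none → Freeable exit entry len occ t a l
  | nonpos (a : R) (l : ℝ) : l ≤ 0 → Freeable exit entry len occ t a l
  | step (a b : R) (l : ℝ) (d : D) : exit a = some d → entry b = some d →
      occ b = some t → Freeable exit entry len occ t b (l - len a) →
      Freeable exit entry len occ t a l

/-- the freeable predicate characterizes path length.
`freeable_t(a, l)` holds iff there is a directed path `a = r₀, r₁, …, r_m`
whose routes (except possibly `a` itself) are all occupied by `t`, such that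
either `Σ_{i<m} routeLength(r_i) ≥ l`, or the path ends in a route with
null exit. -/
theorem stmt8 {R D T : Type} [Fintype R] (exit entry : R → Option D)
    (len : R → ℝ) (occ : R → Option T) (t : T)
    (hpos : ∀ r, 0 < len r)
    (hacyc : ∀ r : R, ¬ Relation.TransGen (routeSucc exit entry) r r)
    (a : R) (l : ℝ) :
    Freeable exit entry len occ t a l ↔
      ∃ p : List R, p.head? = some a ∧ p.Chain' (routeSucc exit entry) ∧
        (∀ x ∈ p.tail, occ x = some t) ∧
        (l ≤ (p.dropLast.map len).sum ∨
          ∃ b : R, p.getLast? = some b ∧ exit b = none) := by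
  constructor
  · intro h
    induction h with
    | exit_null a l ha =>
        exact ⟨[a], rfl, List.isChain_singleton a, by simp, Or.inr ⟨a, rfl, ha⟩⟩
    | nonpos a l hl =>
        exact ⟨[a], rfl, List.isChain_singleton a, by simp, Or.inl (by simpa using hl)⟩
    | step a b l d hx he ho _h ih =>
        obtain ⟨p, hhead, hchain, hocc, hrest⟩ := ih
        obtain ⟨q, rfl⟩ : ∃ q, p = b :: q := by
          cases p with
          | nil => simp at hhead
          | cons x q =>
              obtain rfl : x = b := by simpa using hhead
              exact ⟨q, rfl⟩
        refine ⟨a :: b :: q, rfl, ?_, ?_, ?_⟩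
        · exact List.isChain_cons_cons.2 ⟨⟨d, hx, he⟩, hchain⟩
        · intro x hx'
          rcases List.mem_cons.1 hx' with rfl | hx''
          · exact ho
          · exact hocc _ hx''
        · rcases hrest with hsum | hnull
          · left
            have : (a :: b :: q).dropLast = a :: (b :: q).dropLast := rfl
            rw [this]
            simp only [List.map_cons, List.sum_cons]
            linarith
          · right
            obtain ⟨c, hc, hcn⟩ := hnull
            exact ⟨c, by rw [List.getLast?_cons_cons]; exact hc, hcn⟩
  · rintro ⟨p, hhead, hchain, hocc, hrest⟩
    induction p generalizing a l with
    | nil => simp at hhead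
    | cons x q ih =>
        obtain rfl : a = x := by simpa using hhead.symm
        cases q with
        | nil =>
            rcases hrest with hsum | hnull
            · exact Freeable.nonpos a l (by simpa using hsum)
            · obtain ⟨c, hc, hcn⟩ := hnull
              obtain rfl : a = c := by simpa using hc
              exact Freeable.exit_null a l hcn
        | cons b r =>
            obtain ⟨⟨d, hx, he⟩, hchain'⟩ := List.isChain_cons_cons.1 hchain
            have hob : occ b = some t := hocc b (by simp)
            refine Freeable.step a b l d hx he hob ?_
            refine ih b (l - len a) rfl hchain' (fun y hy => hocc y (List.mem_cons_of_mem _ hy)) ?_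
            rcases hrest with hsum | hnull
            · left
              have : (a :: b :: r).dropLast = a :: (b :: r).dropLast := rfl
              rw [this] at hsum
              simp only [List.map_cons, List.sum_cons] at hsum
              linarith
            · right
              obtain ⟨c, hc, hcn⟩ := hnull
              exact ⟨c, by rwa [List.getLast?_cons_cons] at hc, hcn⟩
end

section
/- Two trains on opposite ends of a single linear corridor with no sidings, each needing to exit at the other end, are bound for deadlock: no correct plan exists, regardless of corridor length n ≥ 1. -/
/-- One transition of the two-train corridor system on routes `0, …, n−1`.
Train `0` travels rightward, train `1` leftward.  A moving train extends its
occupation by exactly the adjacent route in its travel direction (which must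
be free), and may simultaneously free some of its own routes (trains free
routes only behind their front; freeing more routes only makes more behavior
possible).  Trains cannot move backward. -/
inductive CorStep (n : ℕ) : (ℕ → Option (Fin 2)) → (ℕ → Option (Fin 2)) → Prop
  | moveA (o o' : ℕ → Option (Fin 2)) (i : ℕ) :
      i + 1 < n → o i = some 0 → o (i + 1) = none →
      o' (i + 1) = some 0 →
      (∀ j, j ≠ i + 1 → o' j = o j ∨ (o j = some 0 ∧ o' j = none)) →
      CorStep n o o'
  | moveB (o o' : ℕ → Option (Fin 2)) (i : ℕ) :
      0 < i → i < n → o i = some 1 → o (i - 1) = none →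
      o' (i - 1) = some 1 →
      (∀ j, j ≠ i - 1 → o' j = o j ∨ (o j = some 1 ∧ o' j = none)) →
      CorStep n o o'

lemma corstep_inv {n : ℕ} {o o' : ℕ → Option (Fin 2)} (h : CorStep n o o')
    (inv : ∀ a b, o a = some 0 → o b = some 1 → a < b) :
    ∀ a b, o' a = some 0 → o' b = some 1 → a < b := by
  cases h with
  | moveA i hi h0 hf h1 hrest =>
    intro a b ha hb
    have hbne : b ≠ i + 1 := by
      intro e; rw [e, h1] at hb; exact absurd hb (by decide)
    have hb' : o b = some 1 := by
      rcases hrest b hbne with h | ⟨h, h'⟩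
      · rw [← h]; exact hb
      · rw [h'] at hb; exact absurd hb (by simp)
    by_cases hae : a = i + 1
    · subst hae
      have h1b : i < b := inv i b h0 hb'
      have : b ≠ i + 1 := by
        intro e; rw [e, hf] at hb'; exact absurd hb' (by simp)
      omega
    · have ha' : o a = some 0 := by
        rcases hrest a hae with h | ⟨h, h'⟩
        · rw [← h]; exact ha
        · rw [h'] at ha; exact absurd ha (by simp)
      exact inv a b ha' hb'
  | moveB i hi0 hi h1o hf h1 hrest =>
    intro a b ha hb
    have hane : a ≠ i - 1 := by
      intro e; rw [e, h1] at ha; exact absurd ha (by decide)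
    have ha' : o a = some 0 := by
      rcases hrest a hane with h | ⟨h, h'⟩
      · rw [← h]; exact ha
      · rw [h'] at ha; exact absurd ha (by simp)
    by_cases hbe : b = i - 1
    · subst hbe
      have hai : a < i := inv a i ha' h1o
      have : a ≠ i - 1 := by
        intro e; rw [e, hf] at ha'; exact absurd ha' (by simp)
      omega
    · have hb' : o b = some 1 := by
        rcases hrest b hbe with h | ⟨h, h'⟩
        · rw [← h]; exact hb
        · rw [h'] at hb; exact absurd hb (by simp)
      exact inv a b ha' hb'

/-- two trains on opposite ends of a single linear corridor with
no sidings, each needing to exit at the other end, are bound for deadlock: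
for every corridor length n ≥ 1, from the initial state (train A on r₁, train
B on r_n, everything else free), no reachable state has train A occupying r_n
and train B occupying r₁ — in particular also no correct plan bringing both
trains past each other can exist. -/
theorem stmt9 (n : ℕ) (hn : 1 ≤ n) (o₀ : ℕ → Option (Fin 2))
    (hA : o₀ 0 = some 0) (hB : o₀ (n - 1) = some 1)
    (hfree : ∀ j, j ≠ 0 → j ≠ n - 1 → o₀ j = none) :
    ∀ o : ℕ → Option (Fin 2), Relation.ReflTransGen (CorStep n) o₀ o →
      ¬ (o (n - 1) = some 0 ∧ o 0 = some 1) := by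
  rcases Nat.lt_or_ge n 2 with h2 | h2
  · -- n = 1: initial state is already contradictory
    have hn1 : n = 1 := by omega
    subst hn1
    simp only [Nat.sub_self] at hB
    rw [hA] at hB
    exact absurd hB (by decide)
  · -- n ≥ 2: invariant
    have inv0 : ∀ a b, o₀ a = some 0 → o₀ b = some 1 → a < b := by
      intro a b ha hb
      have ha0 : a = 0 := by
        by_contra h
        rcases eq_or_ne a (n - 1) with e | e
        · rw [e, hB] at ha; exact absurd ha (by decide)
        · rw [hfree a h e] at ha; exact absurd ha (by simp)
      have hb0 : b = n - 1 := by
        by_contra h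
        rcases eq_or_ne b 0 with e | e
        · rw [e, hA] at hb; exact absurd hb (by decide)
        · rw [hfree b e h] at hb; exact absurd hb (by simp)
      omega
    intro o hreach
    have inv : ∀ a b, o a = some 0 → o b = some 1 → a < b := by
      induction hreach with
      | refl => exact inv0
      | tail _ step ih => exact corstep_inv step ih
    rintro ⟨h1, h0⟩
    have := inv (n - 1) 0 h1 h0
    omega
end
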